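/- Let f : (ℂ²,0) → (ℂ,0) be an analytic germ mini-regular in x of order m (i.e. ord f = m and the degree-m homogeneous part f_m satisfies f_m(1,0) ≠ 0). Let x = γ(y) be a Puiseux series with γ(0)=0 that is a root of ∂f/∂x = 0 but not of f = 0. Then ord_y f(γ(y),y) ≥ m and ℓ(γ) := ord_y (∂f/∂y)(γ(y),y) / ord_y f(γ(y),y) ≥ 1 - 1/m = (m-1)/m. -/

import Mathlib

open Filter

open Asymptotics Topology in
private lemma aux_diff_bound (d : ℕ) (A : ContinuousMultilinearMap ℂ (fun _ : Fin d => ℂ × ℂ) ℂ)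
    (z w : ℂ × ℂ) (R : ℝ) (hz : ‖z‖ ≤ R) (hw : ‖w‖ ≤ R) :
    ‖A (fun _ => z) - A (fun _ => w)‖ ≤ ‖A‖ * d * R ^ (d - 1) * ‖z - w‖ := by
  have hR : 0 ≤ R := le_trans (norm_nonneg _) hz
  rcases Nat.eq_zero_or_pos d with hd0 | hdpos
  · subst hd0
    have he : (fun _ : Fin 0 => z) = (fun _ => w) := by funext i; exact absurd i.2 (by omega)
    rw [he, sub_self, norm_zero]; positivity
  · have hle := A.norm_image_sub_le (fun _ => z) (fun _ => w)
    have hpi1 : ‖(fun _ : Fin d => z)‖ ≤ R := (pi_norm_le_iff_of_nonneg hR).mpr fun _ => hz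
    have hpi2 : ‖(fun _ : Fin d => w)‖ ≤ R := (pi_norm_le_iff_of_nonneg hR).mpr fun _ => hw
    have hpidiff : ‖(fun _ : Fin d => z) - (fun _ : Fin d => w)‖ = ‖z - w‖ := by
      have : (fun _ : Fin d => z) - (fun _ : Fin d => w) = (fun _ : Fin d => z - w) := rfl
      rw [this]
      apply le_antisymm
      · exact (pi_norm_le_iff_of_nonneg (norm_nonneg _)).mpr fun _ => le_rfl
      · exact norm_le_pi_norm (fun _ : Fin d => z - w) ⟨0, hdpos⟩
    refine hle.trans ?_
    rw [hpidiff, Fintype.card_fin]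
    refine mul_le_mul_of_nonneg_right ?_ (norm_nonneg _)
    refine mul_le_mul_of_nonneg_left ?_ (by positivity)
    exact pow_le_pow_left₀ (le_trans (norm_nonneg _) (le_max_left _ _)) (max_le hpi1 hpi2) _

private lemma aux_exp_le {d k N : ℕ} (hk : 1 ≤ k) (hkN : k < N) (hd : 1 ≤ d) :
    d * k + 1 ≤ k * (d - 1) + N := by
  obtain ⟨d', rfl⟩ : ∃ d', d = d' + 1 := ⟨d - 1, by omega⟩
  have h1 : (d' + 1) * k = d' * k + k := by ring
  have h2 : k * (d' + 1 - 1) = d' * k := by simp [mul_comm]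
  omega

open Asymptotics Topology in
/-- Core limit computation: if `F` has a power series whose coefficients vanish in degrees `< d`,
and `x` has order `k < N` at `0`, then `F (x t, t^N) / t^(d*k)` tends to
`(u 0)^d * (coefficient of z^d)`. -/
private lemma auxA (F : ℂ × ℂ → ℂ) (r : FormalMultilinearSeries ℂ (ℂ × ℂ) ℂ)
    (hF : HasFPowerSeriesAt F r 0) (d : ℕ) (hvan : ∀ j < d, r j = 0)
    (x u : ℂ → ℂ) (k N : ℕ) (hk : 1 ≤ k) (hkN : k < N)
    (hu : ContinuousAt u 0) (hxu : ∀ᶠ t in 𝓝 (0:ℂ), x t = t ^ k * u t) :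
    Tendsto (fun t => F (x t, t ^ N) / t ^ (d * k)) (𝓝[≠] (0:ℂ))
      (𝓝 ((u 0) ^ d * (r d fun _ => ((1:ℂ), (0:ℂ))))) := by
  set a := r d (fun _ => ((1:ℂ), (0:ℂ))) with ha
  set C := ‖u 0‖ + 1 with hCdef
  have hC1 : (1:ℝ) ≤ C := le_add_of_nonneg_left (norm_nonneg _)
  have hC0 : (0:ℝ) < C := lt_of_lt_of_le one_pos hC1
  -- partial sum collapses to the single degree-d term
  have hps : ∀ z : ℂ × ℂ, r.partialSum (d+1) z = r d (fun _ => z) := by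
    intro z
    rw [FormalMultilinearSeries.partialSum]
    rw [Finset.sum_eq_single_of_mem d (Finset.self_mem_range_succ d)]
    intro j hj hjd
    have : j < d := lt_of_le_of_ne (Nat.lt_succ_iff.mp (Finset.mem_range.mp hj)) hjd
    rw [hvan j this]; rfl
  -- big-O bound for the remainder
  obtain ⟨C1, hC1pos, hC1b⟩ := isBigO_iff'.mp ((by simpa using hF.isBigO_sub_partialSum_pow (d+1)) :
    (fun z : ℂ × ℂ => F z - r.partialSum (d+1) z) =O[𝓝 0] fun z => ‖z‖ ^ (d+1))
  have harc : Tendsto (fun t : ℂ => ((x t, t ^ N) : ℂ × ℂ)) (𝓝 0) (𝓝 0) := by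
    have hxc : Tendsto x (𝓝 0) (𝓝 0) := by
      have h1 : ContinuousAt (fun t : ℂ => t ^ k * u t) 0 := (continuousAt_id.pow k).mul hu
      have h2 : Tendsto (fun t : ℂ => t ^ k * u t) (𝓝 0) (𝓝 0) := by
        simpa [zero_pow (show k ≠ 0 by omega)] using h1.tendsto
      exact Tendsto.congr' (by filter_upwards [hxu] with t ht; exact ht.symm) h2
    have htn : Tendsto (fun t : ℂ => t ^ N) (𝓝 0) (𝓝 0) := by
      simpa [zero_pow (show N ≠ 0 by omega)] using ((continuous_pow N).continuousAt (x := (0:ℂ))).tendsto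
    simpa [Prod.mk_zero_zero] using hxc.prodMk_nhds htn
  have hrem : ∀ᶠ t in 𝓝 (0:ℂ), ‖F (x t, t ^ N) - r d (fun _ => ((x t, t ^ N) : ℂ × ℂ))‖
      ≤ C1 * ‖((x t, t ^ N) : ℂ × ℂ)‖ ^ (d+1) := by
    filter_upwards [harc.eventually hC1b] with t ht
    simpa [hps, abs_of_nonneg, le_max_iff] using ht
  have hub : ∀ᶠ t in 𝓝 (0:ℂ), ‖u t‖ ≤ C := by
    have := hu.norm.tendsto.eventually_le_const (lt_add_one ‖u 0‖)
    simpa using this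
  have hsmall : ∀ᶠ t in 𝓝 (0:ℂ), ‖t‖ ≤ 1 :=
    Metric.eventually_nhds_iff.mpr ⟨1, one_pos,
      by intro y hy; simpa using le_of_lt (by simpa [dist_eq_norm] using hy)⟩
  set A := r d with hA
  set B := C1 * C ^ (d+1) + ‖A‖ * d * C ^ (d-1) with hB
  -- key pointwise bound
  have key : ∀ᶠ t in 𝓝[≠] (0:ℂ),
      ‖F (x t, t ^ N) / t ^ (d*k) - (u t) ^ d * a‖ ≤ B * ‖t‖ := by
    filter_upwards [eventually_nhdsWithin_of_eventually_nhds hxu,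
      eventually_nhdsWithin_of_eventually_nhds hrem,
      eventually_nhdsWithin_of_eventually_nhds hub,
      eventually_nhdsWithin_of_eventually_nhds hsmall,
      self_mem_nhdsWithin] with t hxt hremt hubt hst (htne : t ≠ 0)
    have htpos : (0:ℝ) < ‖t‖ := by simpa using htne
    have htk : ‖x t‖ ≤ C * ‖t‖ ^ k := by
      rw [hxt, norm_mul, norm_pow, mul_comm]
      exact mul_le_mul_of_nonneg_right hubt (by positivity)
    have hb1 : ‖((x t, t ^ N) : ℂ × ℂ)‖ ≤ C * ‖t‖ ^ k := by
      rw [Prod.norm_def]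
      refine max_le htk ?_
      rw [norm_pow]
      calc ‖t‖ ^ N ≤ ‖t‖ ^ k := pow_le_pow_of_le_one (norm_nonneg _) hst (le_of_lt hkN)
        _ ≤ C * ‖t‖ ^ k := le_mul_of_one_le_left (by positivity) hC1
    have hb2 : ‖((x t, (0:ℂ)) : ℂ × ℂ)‖ ≤ C * ‖t‖ ^ k := by
      rw [Prod.norm_def]
      refine max_le htk ?_
      rw [norm_zero]; positivity
    -- T2 = (x t)^d * a
    have hT2 : A (fun _ => ((x t, (0:ℂ)) : ℂ × ℂ)) = (x t) ^ d * a := by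
      have he : ((x t, (0:ℂ)) : ℂ × ℂ) = x t • ((1:ℂ), (0:ℂ)) := by simp [Prod.ext_iff]
      rw [he]
      have := A.map_smul_univ (fun _ : Fin d => x t) (fun _ => ((1:ℂ), (0:ℂ)))
      simpa [smul_eq_mul] using this
    -- bound on the numerator
    have hnum : ‖F (x t, t ^ N) - (x t) ^ d * a‖ ≤ B * ‖t‖ ^ (d*k+1) := by
      have hd1 : ‖F (x t, t ^ N) - A (fun _ => ((x t, t ^ N) : ℂ × ℂ))‖
          ≤ C1 * C ^ (d+1) * ‖t‖ ^ (d*k+1) := by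
        refine hremt.trans ?_
        calc C1 * ‖((x t, t ^ N) : ℂ × ℂ)‖ ^ (d+1) ≤ C1 * (C * ‖t‖ ^ k) ^ (d+1) := by
              exact mul_le_mul_of_nonneg_left (pow_le_pow_left₀ (norm_nonneg _) hb1 _)
                (le_of_lt hC1pos)
          _ = C1 * C ^ (d+1) * ‖t‖ ^ (k*(d+1)) := by rw [mul_pow, ← pow_mul]; ring
          _ ≤ C1 * C ^ (d+1) * ‖t‖ ^ (d*k+1) := by
              refine mul_le_mul_of_nonneg_left ?_ (by positivity)
              exact pow_le_pow_of_le_one (norm_nonneg _) hst (by nlinarith)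
      have hd2 : ‖A (fun _ => ((x t, t ^ N) : ℂ × ℂ)) - (x t) ^ d * a‖
          ≤ ‖A‖ * d * C ^ (d-1) * ‖t‖ ^ (d*k+1) := by
        rw [← hT2]
        rcases Nat.eq_zero_or_pos d with hd0 | hdpos
        · subst hd0
          have he : (fun _ : Fin 0 => ((x t, t ^ N) : ℂ × ℂ))
              = (fun _ => ((x t, (0:ℂ)) : ℂ × ℂ)) := by
            funext i; exact absurd i.2 (by omega)
          rw [he, sub_self, norm_zero]; positivity
        · have hdb := aux_diff_bound d A ((x t, t ^ N)) ((x t, (0:ℂ))) (C * ‖t‖ ^ k) hb1 hb2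
          have hzw : ‖(((x t, t ^ N) : ℂ × ℂ)) - ((x t, (0:ℂ)) : ℂ × ℂ)‖ = ‖t‖ ^ N := by
            simp [Prod.norm_def, Prod.sub_def, norm_pow]
          rw [hzw] at hdb
          refine hdb.trans ?_
          calc ‖A‖ * d * (C * ‖t‖ ^ k) ^ (d-1) * ‖t‖ ^ N
              = ‖A‖ * d * C ^ (d-1) * ‖t‖ ^ (k*(d-1) + N) := by
                rw [mul_pow, ← pow_mul, pow_add]; ring
            _ ≤ ‖A‖ * d * C ^ (d-1) * ‖t‖ ^ (d*k+1) := by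
                refine mul_le_mul_of_nonneg_left ?_ (by positivity)
                exact pow_le_pow_of_le_one (norm_nonneg _) hst (aux_exp_le hk hkN hdpos)
      calc ‖F (x t, t ^ N) - (x t) ^ d * a‖
          ≤ ‖F (x t, t ^ N) - A (fun _ => ((x t, t ^ N) : ℂ × ℂ))‖
            + ‖A (fun _ => ((x t, t ^ N) : ℂ × ℂ)) - (x t) ^ d * a‖ := by
            simpa using norm_sub_le_norm_sub_add_norm_sub (F (x t, t ^ N)) _ ((x t) ^ d * a)
        _ ≤ B * ‖t‖ ^ (d*k+1) := by rw [hB, add_mul]; exact add_le_add hd1 hd2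
    -- divide by t^(dk)
    have hquot : F (x t, t ^ N) / t ^ (d*k) - (u t) ^ d * a
        = (F (x t, t ^ N) - (x t) ^ d * a) / t ^ (d*k) := by
      rw [sub_div]
      congr 1
      rw [hxt, mul_pow, ← pow_mul, mul_comm k d]
      field_simp
    rw [hquot, norm_div, norm_pow]
    rw [div_le_iff₀ (by positivity)]
    calc ‖F (x t, t ^ N) - (x t) ^ d * a‖ ≤ B * ‖t‖ ^ (d*k+1) := hnum
      _ = B * ‖t‖ * ‖t‖ ^ (d*k) := by rw [pow_add, pow_one]; ring
  -- assemble the limit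
  have hBt : Tendsto (fun t : ℂ => B * ‖t‖) (𝓝[≠] (0:ℂ)) (𝓝 0) := by
    have : Tendsto (fun t : ℂ => B * ‖t‖) (𝓝 (0:ℂ)) (𝓝 (B * ‖(0:ℂ)‖)) :=
      (continuous_const.mul continuous_norm).continuousAt
    simpa using this.mono_left nhdsWithin_le_nhds
  have h2 : Tendsto (fun t => F (x t, t ^ N) / t ^ (d*k) - (u t) ^ d * a) (𝓝[≠] (0:ℂ)) (𝓝 0) :=
    squeeze_zero_norm' key hBt
  have h1 : Tendsto (fun t => (u t) ^ d * a) (𝓝[≠] (0:ℂ)) (𝓝 ((u 0) ^ d * a)) :=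
    ((hu.pow d).mul continuousAt_const).tendsto.mono_left nhdsWithin_le_nhds
  have h3 := h2.add h1
  rw [zero_add] at h3
  refine h3.congr fun t => by ring

private lemma aux_changeOrigin_zero (p : FormalMultilinearSeries ℂ (ℂ × ℂ) ℂ) (j : ℕ)
    (h : p (1 + j) = 0) : p.derivSeries j = 0 := by
  have h1 : p.changeOriginSeries 1 j = 0 := by
    rw [FormalMultilinearSeries.changeOriginSeries]
    apply Finset.sum_eq_zero
    intro s _
    have hn := p.norm_changeOriginSeriesTerm 1 j s.1 s.2
    rw [h, norm_zero] at hn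
    have : ∀ v w, p.changeOriginSeriesTerm 1 j s.1 s.2 v w = 0 := by
      intro v w
      have hb := ((p.changeOriginSeriesTerm 1 j s.1 s.2).le_opNorm v).trans
        (mul_le_mul_of_nonneg_right (le_of_eq hn) (by positivity))
      rw [zero_mul] at hb
      have hb2 := ((p.changeOriginSeriesTerm 1 j s.1 s.2 v).le_opNorm w).trans
        (mul_le_mul_of_nonneg_right ((norm_le_zero_iff).mpr ?_) (by positivity))
      · rw [zero_mul] at hb2
        exact norm_le_zero_iff.mp hb2
      · exact norm_le_zero_iff.mp hb
    ext v w
    simp [this]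
  have happ : ∀ v : Fin j → ℂ × ℂ, p.derivSeries j v = 0 := by
    intro v
    rw [FormalMultilinearSeries.derivSeries,
      ContinuousLinearMap.compFormalMultilinearSeries_apply', h1]
    simp
  exact ContinuousMultilinearMap.ext fun v => by rw [happ v]; simp

private lemma aux_fx_series (f : ℂ × ℂ → ℂ) (p : FormalMultilinearSeries ℂ (ℂ × ℂ) ℂ)
    (hp : HasFPowerSeriesAt f p 0) :
    HasFPowerSeriesAt (fun z : ℂ × ℂ => fderiv ℂ f z ((1:ℂ), (0:ℂ)))
      ((ContinuousLinearMap.apply ℂ ℂ (((1:ℂ), (0:ℂ)) : ℂ × ℂ)).compFormalMultilinearSeries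
        p.derivSeries) 0 := by
  obtain ⟨R, hball⟩ := hp
  exact ⟨R, (ContinuousLinearMap.apply ℂ ℂ (((1:ℂ), (0:ℂ)) : ℂ × ℂ)).comp_hasFPowerSeriesOnBall
    hball.fderiv⟩

open Asymptotics Topology in
private lemma aux_decomp (L : ℂ × ℂ →L[ℂ] ℂ) (a b : ℂ) :
    L (a, b) = a * L ((1:ℂ), (0:ℂ)) + b * L ((0:ℂ), (1:ℂ)) := by
  have : ((a, b) : ℂ × ℂ) = a • ((1:ℂ), (0:ℂ)) + b • ((0:ℂ), (1:ℂ)) := by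
    simp [Prod.ext_iff]
  rw [this, map_add, map_smul, map_smul, smul_eq_mul, smul_eq_mul]

open Asymptotics Topology in
private lemma aux_deriv_analytic {u : ℂ → ℂ} (h : AnalyticAt ℂ u 0) :
    AnalyticAt ℂ (deriv u) 0 := by
  obtain ⟨s, hs, hos⟩ := h.exists_mem_nhds_analyticOnNhd
  obtain ⟨ε, hε, hball⟩ := Metric.mem_nhds_iff.mp hs
  exact ((hos.mono hball).deriv_of_isOpen Metric.isOpen_ball) 0 (Metric.mem_ball_self hε)

open Asymptotics Topology in
private lemma aux_chain (f : ℂ × ℂ → ℂ) (hf0 : AnalyticAt ℂ f 0)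
    (x : ℂ → ℂ) (hx : AnalyticAt ℂ x 0) (N : ℕ)
    (harc : Tendsto (fun t : ℂ => ((x t, t ^ N) : ℂ × ℂ)) (𝓝 0) (𝓝 0)) :
    (∀ᶠ t in 𝓝 (0:ℂ), deriv (fun s => f (x s, s ^ N)) t
        = deriv x t * fderiv ℂ f (x t, t ^ N) ((1:ℂ), (0:ℂ))
          + (N : ℂ) * t ^ (N-1) * fderiv ℂ f (x t, t ^ N) ((0:ℂ), (1:ℂ)))
      ∧ (∀ᶠ t in 𝓝 (0:ℂ), deriv (fun s => f (s, t ^ N)) (x t)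
        = fderiv ℂ f (x t, t ^ N) ((1:ℂ), (0:ℂ)))
      ∧ (∀ᶠ t in 𝓝 (0:ℂ), deriv (fun s => f (x t, s)) (t ^ N)
        = fderiv ℂ f (x t, t ^ N) ((0:ℂ), (1:ℂ))) := by
  obtain ⟨s, hs, hos⟩ := hf0.exists_mem_nhds_analyticOnNhd
  have hmem : ∀ᶠ t in 𝓝 (0:ℂ), ((x t, t ^ N) : ℂ × ℂ) ∈ s := harc.eventually hs
  have hxan : ∀ᶠ t in 𝓝 (0:ℂ), AnalyticAt ℂ x t := hx.eventually_analyticAt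
  refine ⟨?_, ?_, ?_⟩
  · filter_upwards [hmem, hxan] with t hmt hxt
    have hdf : HasFDerivAt f (fderiv ℂ f (x t, t ^ N)) (x t, t ^ N) :=
      ((hos _ hmt).differentiableAt).hasFDerivAt
    have harct : HasDerivAt (fun s : ℂ => ((x s, s ^ N) : ℂ × ℂ))
        (deriv x t, (N : ℂ) * t ^ (N-1)) t :=
      (hxt.differentiableAt.hasDerivAt).prodMk (hasDerivAt_pow N t)
    have h2 : HasDerivAt (fun s => f (x s, s ^ N))
        (fderiv ℂ f (x t, t ^ N) (deriv x t, (N : ℂ) * t ^ (N-1))) t :=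
      hdf.comp_hasDerivAt t harct
    rw [h2.deriv, aux_decomp]
  · filter_upwards [hmem] with t hmt
    have hdf : HasFDerivAt f (fderiv ℂ f (x t, t ^ N)) (x t, t ^ N) :=
      ((hos _ hmt).differentiableAt).hasFDerivAt
    have h1 : HasDerivAt (fun s : ℂ => ((s, t ^ N) : ℂ × ℂ)) (((1:ℂ), (0:ℂ))) (x t) :=
      (hasDerivAt_id _).prodMk (hasDerivAt_const _ _)
    exact (hdf.comp_hasDerivAt (x t) h1).deriv
  · filter_upwards [hmem] with t hmt
    have hdf : HasFDerivAt f (fderiv ℂ f (x t, t ^ N)) (x t, t ^ N) :=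
      ((hos _ hmt).differentiableAt).hasFDerivAt
    have h1 : HasDerivAt (fun s : ℂ => ((x t, s) : ℂ × ℂ)) (((0:ℂ), (1:ℂ))) (t ^ N) :=
      (hasDerivAt_const _ _).prodMk (hasDerivAt_id _)
    exact (hdf.comp_hasDerivAt (t ^ N) h1).deriv

open Asymptotics Topology in
private lemma aux_order_rep {g w : ℂ → ℂ} (hg : AnalyticAt ℂ g 0) (n : ℕ)
    (hw : AnalyticAt ℂ w 0) (hw0 : w 0 ≠ 0)
    (heq : ∀ᶠ t in 𝓝 (0:ℂ), g t = t ^ n * w t) : analyticOrderAt g 0 = n :=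
  (hg.analyticOrderAt_eq_natCast).mpr ⟨w, hw, hw0, by simpa [smul_eq_mul] using heq⟩

open Asymptotics Topology in
private lemma aux_deriv_rep {g u : ℂ → ℂ} (n : ℕ) (hn : 1 ≤ n) (hu : AnalyticAt ℂ u 0)
    (heq : ∀ᶠ t in 𝓝 (0:ℂ), g t = t ^ n * u t) :
    ∀ᶠ t in 𝓝 (0:ℂ), deriv g t = t ^ (n-1) * ((n:ℂ) * u t + t * deriv u t) := by
  have heq' : g =ᶠ[𝓝 (0:ℂ)] fun t => t ^ n * u t := heq
  have hgd : deriv g =ᶠ[𝓝 (0:ℂ)] deriv (fun t => t ^ n * u t) := heq'.deriv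
  filter_upwards [hgd, hu.eventually_analyticAt] with t ht hut
  rw [ht]
  have h1 : HasDerivAt (fun s : ℂ => s ^ n * u s)
      ((n:ℂ) * t ^ (n-1) * u t + t ^ n * deriv u t) t :=
    (hasDerivAt_pow n t).mul hut.differentiableAt.hasDerivAt
  rw [h1.deriv]
  obtain ⟨n', rfl⟩ : ∃ n', n = n' + 1 := ⟨n - 1, by omega⟩
  simp only [Nat.add_sub_cancel]
  ring

open Asymptotics Topology in
private lemma aux_u0 {gg u : ℂ → ℂ} (n q : ℕ) (hnq : n < q) (hu : ContinuousAt u 0)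
    (hgu : ∀ᶠ t in 𝓝 (0:ℂ), gg t = t ^ n * u t) (C : ℝ)
    (hb : ∀ᶠ t in 𝓝 (0:ℂ), ‖gg t‖ ≤ C * ‖t‖ ^ q) : u 0 = 0 := by
  have hsmall : ∀ᶠ t in 𝓝 (0:ℂ), ‖t‖ ≤ 1 :=
    Metric.eventually_nhds_iff.mpr ⟨1, one_pos,
      by intro y hy; simpa using le_of_lt (by simpa [dist_eq_norm] using hy)⟩
  set C' := max C 0 with hC'
  have key : ∀ᶠ t in 𝓝[≠] (0:ℂ), ‖u t‖ ≤ C' * ‖t‖ := by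
    filter_upwards [eventually_nhdsWithin_of_eventually_nhds hgu,
      eventually_nhdsWithin_of_eventually_nhds hb,
      eventually_nhdsWithin_of_eventually_nhds hsmall,
      self_mem_nhdsWithin] with t hgt hbt hst (htne : t ≠ 0)
    have htpos : (0:ℝ) < ‖t‖ := by simpa using htne
    have h1 : ‖u t‖ * ‖t‖ ^ n = ‖gg t‖ := by rw [hgt, norm_mul, norm_pow]; ring
    have h2 : ‖gg t‖ ≤ C' * ‖t‖ * ‖t‖ ^ n := by
      refine hbt.trans ?_
      calc C * ‖t‖ ^ q ≤ C' * ‖t‖ ^ q :=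
            mul_le_mul_of_nonneg_right (le_max_left _ _) (by positivity)
        _ ≤ C' * ‖t‖ ^ (n+1) := by
            refine mul_le_mul_of_nonneg_left ?_ (le_max_right _ _)
            exact pow_le_pow_of_le_one (norm_nonneg _) hst (by omega)
        _ = C' * ‖t‖ * ‖t‖ ^ n := by rw [pow_succ]; ring
    have h3 := h1.le.trans h2
    exact le_of_mul_le_mul_right (by nlinarith [pow_pos htpos n]) (pow_pos htpos n)
  have h3 : Tendsto u (𝓝[≠] (0:ℂ)) (𝓝 0) := by
    refine squeeze_zero_norm' key ?_
    have : Tendsto (fun t : ℂ => C' * ‖t‖) (𝓝 (0:ℂ)) (𝓝 (C' * ‖(0:ℂ)‖)) :=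
      (continuous_const.mul continuous_norm).continuousAt
    simpa using this.mono_left nhdsWithin_le_nhds
  exact tendsto_nhds_unique (hu.tendsto.mono_left nhdsWithin_le_nhds) h3

open Asymptotics Topology in
private lemma aux_bigO (F : ℂ × ℂ → ℂ) (r : FormalMultilinearSeries ℂ (ℂ × ℂ) ℂ)
    (hF : HasFPowerSeriesAt F r 0) (d : ℕ) (hvan : ∀ j < d, r j = 0) :
    ∃ C : ℝ, 0 < C ∧ ∀ᶠ z in 𝓝 (0 : ℂ × ℂ), ‖F z‖ ≤ C * ‖z‖ ^ d := by
  have hps : ∀ z : ℂ × ℂ, r.partialSum d z = 0 := by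
    intro z
    rw [FormalMultilinearSeries.partialSum]
    apply Finset.sum_eq_zero
    intro j hj
    rw [hvan j (Finset.mem_range.mp hj)]; rfl
  obtain ⟨C, hCpos, hCb⟩ := isBigO_iff'.mp ((by simpa using hF.isBigO_sub_partialSum_pow d) :
    (fun z : ℂ × ℂ => F z - r.partialSum d z) =O[𝓝 0] fun z => ‖z‖ ^ d)
  refine ⟨C, hCpos, ?_⟩
  filter_upwards [hCb] with z hz
  simpa [hps] using hz

open Asymptotics Topology in
/-- for `f` mini-regular in `x` of order `m` and a Puiseux series `γ`
(encoded by the arc `t ↦ (x t, t^N)`, so `ord_y = ord_t / N`) which is a root of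
`∂f/∂x = 0` but not of `f = 0`, one has `ord_y f(γ(y),y) ≥ m` and
`ℓ(γ) = ord_y (∂f/∂y)(γ(y),y) / ord_y f(γ(y),y) ≥ (m-1)/m`. -/
theorem stmt4 (f : ℂ × ℂ → ℂ) (p : FormalMultilinearSeries ℂ (ℂ × ℂ) ℂ)
    (hp : HasFPowerSeriesAt f p 0) (m : ℕ) (hm : 1 ≤ m)
    (hord : p.order = m) (hmini : (p m) (fun _ => ((1 : ℂ), (0 : ℂ))) ≠ 0)
    (N : ℕ) (hN : 1 ≤ N) (x : ℂ → ℂ) (hx : AnalyticAt ℂ x 0) (hx0 : x 0 = 0)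
    (hpolar : ∀ᶠ t in nhds (0 : ℂ), deriv (fun s => f (s, t ^ N)) (x t) = 0)
    (hg : AnalyticAt ℂ (fun t => f (x t, t ^ N)) 0)
    (hgne : ¬ (∀ᶠ t in nhds (0 : ℂ), f (x t, t ^ N) = 0))
    (hgy : AnalyticAt ℂ (fun t => deriv (fun s => f (x t, s)) (t ^ N)) 0)
    (og ogy : ℕ) (hog : analyticOrderAt (fun t => f (x t, t ^ N)) 0 = (og : ℕ∞)) (hogy : analyticOrderAt (fun t => deriv (fun s => f (x t, s)) (t ^ N)) 0 = (ogy : ℕ∞)) :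
    m * N ≤ og ∧ ((m : ℝ) - 1) / m ≤ (ogy : ℝ) / og := by
  have hm0 : (m : ℂ) ≠ 0 := Nat.cast_ne_zero.mpr (by omega)
  have hFx := aux_fx_series f p hp
  set r := (ContinuousLinearMap.apply ℂ ℂ (((1:ℂ), (0:ℂ)) : ℂ × ℂ)).compFormalMultilinearSeries
      p.derivSeries with hrdef
  have hrvan : ∀ j, j < m - 1 → r j = 0 := by
    intro j hj
    have hp0 : p (1 + j) = 0 := by
      apply p.apply_eq_zero_of_lt_order
      rw [hord]; omega
    have hds := aux_changeOrigin_zero p j hp0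
    rw [hrdef]
    exact ContinuousMultilinearMap.ext fun v => by
      rw [ContinuousLinearMap.compFormalMultilinearSeries_apply', hds]; simp
  have hrcoeff : r (m-1) (fun _ => ((1:ℂ), (0:ℂ)))
      = (m : ℂ) * p m (fun _ => ((1:ℂ), (0:ℂ))) := by
    rw [hrdef, ContinuousLinearMap.compFormalMultilinearSeries_apply']
    have hds := p.derivSeries_apply_diag (m-1) (((1:ℂ), (0:ℂ)))
    rw [ContinuousLinearMap.apply_apply, hds]
    obtain ⟨m', hm'⟩ : ∃ m', m = m' + 1 := ⟨m - 1, by omega⟩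
    subst hm'
    simp [nsmul_eq_mul]
  have hane : r (m-1) (fun _ => ((1:ℂ), (0:ℂ))) ≠ 0 := by
    rw [hrcoeff]; exact mul_ne_zero hm0 hmini
  -- arc tends to 0
  have hxc : Tendsto x (𝓝 0) (𝓝 0) := by
    have := hx.continuousAt.tendsto; rwa [hx0] at this
  have htn : Tendsto (fun t : ℂ => t ^ N) (𝓝 0) (𝓝 0) := by
    simpa [zero_pow (show N ≠ 0 by omega)] using ((continuous_pow N).continuousAt (x := (0:ℂ))).tendsto
  have harc : Tendsto (fun t : ℂ => ((x t, t ^ N) : ℂ × ℂ)) (𝓝 0) (𝓝 0) := by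
    simpa [Prod.mk_zero_zero] using hxc.prodMk_nhds htn
  obtain ⟨hchain, hfxeq, hfyeq⟩ := aux_chain f hp.analyticAt x hx N harc
  have hfx0 : ∀ᶠ t in 𝓝 (0:ℂ), fderiv ℂ f (x t, t ^ N) ((1:ℂ), (0:ℂ)) = 0 := by
    filter_upwards [hfxeq, hpolar] with t h1 h2
    rw [← h1]; exact h2
  have hsmall : ∀ᶠ t in 𝓝 (0:ℂ), ‖t‖ ≤ 1 :=
    Metric.eventually_nhds_iff.mpr ⟨1, one_pos,
      by intro y hy; simpa using le_of_lt (by simpa [dist_eq_norm] using hy)⟩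
  -- the Puiseux root has order ≥ N : ‖x t‖ ≤ Cx * ‖t‖^N
  obtain ⟨Cx, hCx0, hxb⟩ : ∃ Cx : ℝ, 0 ≤ Cx ∧ ∀ᶠ t in 𝓝 (0:ℂ), ‖x t‖ ≤ Cx * ‖t‖ ^ N := by
    rcases eq_or_ne (analyticOrderAt x 0) ⊤ with htop | hne
    · refine ⟨0, le_rfl, ?_⟩
      filter_upwards [analyticOrderAt_eq_top.mp htop] with t ht
      simp [ht]
    · obtain ⟨k, hk⟩ := WithTop.ne_top_iff_exists.mp hne
      obtain ⟨u, huA, hu0, hxu⟩ := hx.analyticOrderAt_eq_natCast.mp hk.symm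
      have hxu' : ∀ᶠ t in 𝓝 (0:ℂ), x t = t ^ k * u t := by
        filter_upwards [hxu] with t ht; simpa [smul_eq_mul] using ht
      have hk1 : 1 ≤ k := by
        by_contra hk0
        have h00 : x 0 = u 0 := by simpa [show k = 0 by omega] using hxu'.self_of_nhds
        exact hu0 (by rw [← h00, hx0])
      have hkN : N ≤ k := by
        by_contra hklt
        push_neg at hklt
        have hlim := auxA _ r hFx (m-1) hrvan x u k N hk1 hklt huA.continuousAt hxu'
        have hzero : Tendsto
            (fun t => fderiv ℂ f (x t, t ^ N) ((1:ℂ), (0:ℂ)) / t ^ ((m-1) * k))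
            (𝓝[≠] (0:ℂ)) (𝓝 0) := by
          refine Tendsto.congr' ?_ (tendsto_const_nhds (α := ℂ))
          filter_upwards [eventually_nhdsWithin_of_eventually_nhds hfx0] with t ht
          rw [ht, zero_div]
        have hval := tendsto_nhds_unique hzero hlim
        exact (mul_ne_zero (pow_ne_zero _ hu0) hane) hval.symm
      refine ⟨‖u 0‖ + 1, by positivity, ?_⟩
      have hub : ∀ᶠ t in 𝓝 (0:ℂ), ‖u t‖ ≤ ‖u 0‖ + 1 := by
        have := huA.continuousAt.norm.tendsto.eventually_le_const (lt_add_one ‖u 0‖)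
        simpa using this
      filter_upwards [hxu', hub, hsmall] with t ht hu1 hs1
      rw [ht, norm_mul, norm_pow]
      calc ‖t‖ ^ k * ‖u t‖ ≤ ‖t‖ ^ N * (‖u 0‖ + 1) :=
            mul_le_mul (pow_le_pow_of_le_one (norm_nonneg _) hs1 hkN) hu1 (norm_nonneg _)
              (by positivity)
        _ = (‖u 0‖ + 1) * ‖t‖ ^ N := by ring
  -- part 1 : m*N ≤ og
  have hpvan : ∀ j, j < m → p j = 0 := fun j hj =>
    p.apply_eq_zero_of_lt_order (by rw [hord]; omega)
  obtain ⟨C1, hC1pos, hC1⟩ := aux_bigO f p hp m hpvan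
  obtain ⟨w, hwA, hw0, hgw⟩ := hg.analyticOrderAt_eq_natCast.mp hog
  have hgw' : ∀ᶠ t in 𝓝 (0:ℂ), f (x t, t ^ N) = t ^ og * w t := by
    filter_upwards [hgw] with t ht; simpa [smul_eq_mul] using ht
  have hgb : ∀ᶠ t in 𝓝 (0:ℂ), ‖f (x t, t ^ N)‖ ≤ (C1 * (Cx+1) ^ m) * ‖t‖ ^ (m*N) := by
    filter_upwards [harc.eventually hC1, hxb] with t h1 h2
    refine h1.trans ?_
    have htNn : (0:ℝ) ≤ ‖t‖ ^ N := by positivity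
    have harcb : ‖((x t, t ^ N) : ℂ × ℂ)‖ ≤ (Cx+1) * ‖t‖ ^ N := by
      rw [Prod.norm_def]
      refine max_le (h2.trans (by nlinarith)) ?_
      rw [norm_pow]; nlinarith
    calc C1 * ‖((x t, t ^ N) : ℂ × ℂ)‖ ^ m ≤ C1 * ((Cx+1) * ‖t‖ ^ N) ^ m :=
          mul_le_mul_of_nonneg_left (pow_le_pow_left₀ (norm_nonneg _) harcb m) (le_of_lt hC1pos)
      _ = (C1 * (Cx+1) ^ m) * ‖t‖ ^ (m*N) := by
          rw [mul_pow, ← pow_mul, mul_comm N m]; ring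
  have part1 : m * N ≤ og := by
    by_contra hlt
    push_neg at hlt
    exact hw0 (aux_u0 og (m*N) hlt hwA.continuousAt hgw' _ hgb)
  have hmN1 : 1 ≤ m * N := by
    have := Nat.mul_le_mul hm hN; simpa using this
  have hog1 : 1 ≤ og := le_trans hmN1 part1
  -- part 2 : og = N + ogy via the chain rule
  obtain ⟨v, hvA, hv0, hgyv⟩ := hgy.analyticOrderAt_eq_natCast.mp hogy
  have hgyv' : ∀ᶠ t in 𝓝 (0:ℂ), deriv (fun s => f (x t, s)) (t ^ N) = t ^ ogy * v t := by
    filter_upwards [hgyv] with t ht; simpa [smul_eq_mul] using ht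
  have hrep2 : ∀ᶠ t in 𝓝 (0:ℂ), deriv (fun s => f (x s, s ^ N)) t
      = t ^ (N - 1 + ogy) * ((N:ℂ) * v t) := by
    filter_upwards [hchain, hfxeq, hpolar, hgyv', hfyeq] with t h1 h2 h3 h4 h5
    rw [h1, ← h2, h3, ← h5, h4, pow_add]
    ring
  have hDA : AnalyticAt ℂ (deriv (fun s => f (x s, s ^ N))) 0 := by
    have hA2 : AnalyticAt ℂ (fun t : ℂ => t ^ (N - 1 + ogy) * ((N:ℂ) * v t)) 0 :=
      ((analyticAt_id (𝕜 := ℂ) (z := (0:ℂ))).pow _).mul (analyticAt_const.mul hvA)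
    exact hA2.congr (EventuallyEq.symm hrep2)
  have hord2 : analyticOrderAt (deriv (fun s => f (x s, s ^ N))) 0 = ((N - 1 + ogy : ℕ) : ℕ∞) := by
    refine aux_order_rep hDA _ (analyticAt_const.mul hvA) ?_ hrep2
    simp only [ne_eq, mul_eq_zero, not_or, Pi.mul_apply]
    exact ⟨Nat.cast_ne_zero.mpr (by omega), hv0⟩
  have hrep1 := aux_deriv_rep og hog1 hwA hgw'
  have hord1 : analyticOrderAt (deriv (fun s => f (x s, s ^ N))) 0 = ((og - 1 : ℕ) : ℕ∞) := by
    refine aux_order_rep hDA _ ?_ ?_ hrep1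
    · exact (analyticAt_const.mul hwA).add
        ((analyticAt_id (𝕜 := ℂ) (z := (0:ℂ))).mul (aux_deriv_analytic hwA))
    · simp only [deriv]
      simpa using mul_ne_zero (Nat.cast_ne_zero.mpr (by omega : og ≠ 0) : (og:ℂ) ≠ 0) hw0
  have heq3 : og - 1 = N - 1 + ogy := by
    rw [hord1] at hord2
    exact_mod_cast hord2
  have hogeq : og = N + ogy := by omega
  refine ⟨part1, ?_⟩
  have hmR : (0:ℝ) < m := by exact_mod_cast (by omega : 0 < m)
  have hogR : (0:ℝ) < og := by exact_mod_cast (by omega : 0 < og)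
  rw [div_le_div_iff₀ hmR hogR]
  have c1 : (m:ℝ) * N ≤ og := by exact_mod_cast part1
  have c2 : (og:ℝ) = N + ogy := by exact_mod_cast hogeq
  nlinarith
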